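/- arXiv:2202.04532 — 4 statements merged into one kernel-verified Lean document; each statement's English description precedes it below -/
import Mathlib

section
/- Let A₁, A₂ be disjoint non-empty closed connected subsets of the real projective plane such that there exists a point p through which no line meets both A₁ and A₂. Then there exists a line of the projective plane that is a supporting line of both A₁ and A₂, i.e., there exist points x₁ ∈ A₁, x₂ ∈ A₂ and a line L with xᵢ ∈ L ∩ Aᵢ and, in some affine chart containing xᵢ, Aᵢ lies entirely in one of the closed half-planes determined by L, for i = 1, 2. -/
noncomputable instance instTopProjectivization (V : Type*) [AddCommGroup V] [Module ℝ V]
    [TopologicalSpace V] : TopologicalSpace (Projectivization ℝ V) :=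
  inferInstanceAs (TopologicalSpace (Quotient (projectivizationSetoid ℝ V)))

/-- Real projective n-space. -/
abbrev Proj (n : ℕ) := Projectivization ℝ (Fin (n + 1) → ℝ)

/-- The dual projective space, projectivizing (continuous) linear forms. -/
abbrev DProj (n : ℕ) := Projectivization ℝ ((Fin (n + 1) → ℝ) →L[ℝ] ℝ)

/-- The hyperplane `f supports A at x` in some affine chart: `x ∈ A ∩ H` and, in the affine
chart given by a form `g` (complement of `{g = 0}`) containing `x` and `A`, the set `A` lies in
one of the two closed half-spaces bounded by the hyperplane `{f = 0}`. -/
def SupportsAt {n : ℕ} (f : (Fin (n + 1) → ℝ) →L[ℝ] ℝ) (A : Set (Proj n)) (x : Proj n) : Prop :=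
  x ∈ A ∧ f x.rep = 0 ∧
    ∃ g : (Fin (n + 1) → ℝ) →L[ℝ] ℝ, g x.rep ≠ 0 ∧ (∀ y ∈ A, g y.rep ≠ 0) ∧
      ((∀ y ∈ A, 0 ≤ f y.rep * g y.rep) ∨ (∀ y ∈ A, f y.rep * g y.rep ≤ 0))


-- basic helpers

lemma exists_const_rep (v : Fin 3 → ℝ) (hv : v ≠ 0) :
    ∃ c : ℝ, c ≠ 0 ∧ ∀ f : (Fin 3 → ℝ) →L[ℝ] ℝ,
      f (Projectivization.mk ℝ v hv).rep = c * f v := by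
  obtain ⟨a, ha⟩ := Projectivization.exists_smul_eq_mk_rep ℝ v hv
  refine ⟨(a : ℝ), a.ne_zero, fun f => ?_⟩
  rw [← ha, Units.smul_def, map_smul]
  rfl

lemma isOpen_proj_iff {S : Set (Proj 2)} :
    IsOpen S ↔ IsOpen {v : {w : Fin 3 → ℝ // w ≠ 0} | Projectivization.mk ℝ v.1 v.2 ∈ S} := by
  exact (isQuotientMap_quotient_mk'.isOpen_preimage).symm

noncomputable def sphereMap (v : Metric.sphere (0 : Fin 3 → ℝ) 1) : Proj 2 :=
  Projectivization.mk ℝ v.1 (by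
    have h := mem_sphere_zero_iff_norm.1 v.2
    intro h0; rw [h0] at h; simp at h)

lemma continuous_sphereMap : Continuous sphereMap := by
  have : Continuous fun v : Metric.sphere (0 : Fin 3 → ℝ) 1 =>
      (⟨v.1, by
        have h := mem_sphere_zero_iff_norm.1 v.2
        intro h0; rw [h0] at h; simp at h⟩ : {w : Fin 3 → ℝ // w ≠ 0}) :=
    continuous_subtype_val.subtype_mk _
  exact continuous_quotient_mk'.comp this

lemma surjective_sphereMap : Function.Surjective sphereMap := by
  intro x
  have hre := x.rep_nonzero
  refine ⟨⟨‖x.rep‖⁻¹ • x.rep, ?_⟩, ?_⟩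
  · exact mem_sphere_zero_iff_norm.2 (norm_smul_inv_norm hre)
  · show Projectivization.mk ℝ (‖x.rep‖⁻¹ • x.rep) _ = x
    have h2 : Projectivization.mk ℝ (‖x.rep‖⁻¹ • x.rep)
        (by intro h0; exact (by simpa [norm_smul, hre] using congrArg norm h0 : False)) =
        Projectivization.mk ℝ x.rep hre := by
      rw [Projectivization.mk_eq_mk_iff']
      exact ⟨‖x.rep‖⁻¹, rfl⟩
    exact h2.trans (Projectivization.mk_rep x)

instance : CompactSpace (Proj 2) :=
  ⟨by rw [← surjective_sphereMap.range_eq]; exact isCompact_range continuous_sphereMap⟩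

-- K sets and closedness of T sets
def Kset (A : Set (Proj 2)) : Set (Fin 3 → ℝ) := Subtype.val '' (sphereMap ⁻¹' A)

lemma Kset_compact {A : Set (Proj 2)} (hA : IsClosed A) : IsCompact (Kset A) :=
  ((hA.preimage continuous_sphereMap).isCompact).image continuous_subtype_val

lemma Kset_spec {A : Set (Proj 2)} (f : (Fin 3 → ℝ) →L[ℝ] ℝ) :
    (∃ v ∈ Kset A, f v = 0) ↔ ∃ x ∈ A, f x.rep = 0 := by
  constructor
  · rintro ⟨v, ⟨w, hwA, rfl⟩, hfv⟩
    refine ⟨sphereMap w, hwA, ?_⟩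
    obtain ⟨c, _, hc⟩ := exists_const_rep w.1 (by
      have h := mem_sphere_zero_iff_norm.1 w.2
      intro h0; rw [h0] at h; simp at h)
    rw [show sphereMap w = Projectivization.mk ℝ w.1 _ from rfl, hc, hfv, mul_zero]
  · rintro ⟨x, hxA, hfx⟩
    have hre := x.rep_nonzero
    obtain ⟨w, hw⟩ : ∃ w, sphereMap w = x := surjective_sphereMap x
    refine ⟨w.1, ⟨w, by simp only [Set.mem_preimage, hw]; exact hxA, rfl⟩, ?_⟩
    obtain ⟨c, hc0, hc⟩ := exists_const_rep w.1 (by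
      have h := mem_sphere_zero_iff_norm.1 w.2
      intro h0; rw [h0] at h; simp at h)
    have := hc f
    rw [show Projectivization.mk ℝ w.1 _ = sphereMap w from rfl, hw, hfx] at this
    exact (mul_eq_zero.1 this.symm).resolve_left hc0

lemma closed_T {A : Set (Proj 2)} (hA : IsClosed A) (N : Submodule ℝ ((Fin 3 → ℝ) →L[ℝ] ℝ)) :
    IsClosed {f : ↥N | ∃ x ∈ A, (f : (Fin 3 → ℝ) →L[ℝ] ℝ) x.rep = 0} := by
  haveI : CompactSpace ↥(Kset A) := isCompact_iff_compactSpace.1 (Kset_compact hA)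
  have heq : {f : ↥N | ∃ x ∈ A, (f : (Fin 3 → ℝ) →L[ℝ] ℝ) x.rep = 0} =
      Prod.snd '' {q : ↥(Kset A) × ↥N |
        ((q.2 : (Fin 3 → ℝ) →L[ℝ] ℝ)) (q.1 : Fin 3 → ℝ) = 0} := by
    ext f
    simp only [Set.mem_setOf_eq, Set.mem_image]
    constructor
    · intro hf
      obtain ⟨v, hvK, hv0⟩ := (Kset_spec (A := A) (f : (Fin 3 → ℝ) →L[ℝ] ℝ)).2 hf
      exact ⟨⟨⟨v, hvK⟩, f⟩, hv0, rfl⟩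
    · rintro ⟨⟨v, g⟩, hq, rfl⟩
      exact (Kset_spec (A := A) _).1 ⟨v.1, v.2, hq⟩
  rw [heq]
  apply isClosedMap_snd_of_compactSpace
  apply isClosed_eq _ continuous_const
  exact (continuous_subtype_val.comp continuous_snd).clm_apply
    (continuous_subtype_val.comp continuous_fst)

-- continuity of the chart map
lemma continuousOn_ratio (f₀ g₁ hh : (Fin 3 → ℝ) →L[ℝ] ℝ) :
    ContinuousOn (fun x : Proj 2 => (g₁ x.rep / f₀ x.rep, hh x.rep / f₀ x.rep))
      {x : Proj 2 | f₀ x.rep ≠ 0} := by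
  set Φ := fun x : Proj 2 => (g₁ x.rep / f₀ x.rep, hh x.rep / f₀ x.rep) with hΦ
  set U := {x : Proj 2 | f₀ x.rep ≠ 0} with hU
  rw [continuousOn_iff']
  intro W hW
  refine ⟨U ∩ Φ ⁻¹' W, ?_, by ext x; simp [hU]; tauto⟩
  rw [isOpen_proj_iff]
  have hkey : ∀ v : {w : Fin 3 → ℝ // w ≠ 0},
      (Projectivization.mk ℝ v.1 v.2 ∈ U ∩ Φ ⁻¹' W) ↔
        (f₀ v.1 ≠ 0 ∧ (g₁ v.1 / f₀ v.1, hh v.1 / f₀ v.1) ∈ W) := by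
    intro v
    obtain ⟨c, hc0, hc⟩ := exists_const_rep v.1 v.2
    have h1 : f₀ (Projectivization.mk ℝ v.1 v.2).rep = c * f₀ v.1 := hc f₀
    have h2 : g₁ (Projectivization.mk ℝ v.1 v.2).rep = c * g₁ v.1 := hc g₁
    have h3 : hh (Projectivization.mk ℝ v.1 v.2).rep = c * hh v.1 := hc hh
    constructor
    · rintro ⟨hu, hw⟩
      have hne : f₀ v.1 ≠ 0 := by
        intro h; apply hu; rw [Set.mem_setOf_eq] at *; rw [h1, h, mul_zero]
      refine ⟨hne, ?_⟩
      have : Φ (Projectivization.mk ℝ v.1 v.2) = (g₁ v.1 / f₀ v.1, hh v.1 / f₀ v.1) := by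
        rw [hΦ]; simp only [h1, h2, h3]
        rw [mul_div_mul_left _ _ hc0, mul_div_mul_left _ _ hc0]
      rwa [Set.mem_preimage, this] at hw
    · rintro ⟨hne, hw⟩
      constructor
      · show f₀ (Projectivization.mk ℝ v.1 v.2).rep ≠ 0
        rw [h1]; exact mul_ne_zero hc0 hne
      · show Φ (Projectivization.mk ℝ v.1 v.2) ∈ W
        have : Φ (Projectivization.mk ℝ v.1 v.2) = (g₁ v.1 / f₀ v.1, hh v.1 / f₀ v.1) := by
          rw [hΦ]; simp only [h1, h2, h3]
          rw [mul_div_mul_left _ _ hc0, mul_div_mul_left _ _ hc0]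
        rwa [this]
  have : {v : {w : Fin 3 → ℝ // w ≠ 0} | Projectivization.mk ℝ v.1 v.2 ∈ U ∩ Φ ⁻¹' W} =
      Subtype.val ⁻¹' {w : Fin 3 → ℝ | f₀ w ≠ 0 ∧ (g₁ w / f₀ w, hh w / f₀ w) ∈ W} := by
    ext v; exact hkey v
  rw [this]
  apply IsOpen.preimage continuous_subtype_val
  have hopen : IsOpen {w : Fin 3 → ℝ | f₀ w ≠ 0} := isOpen_ne.preimage f₀.continuous
  have hcont : ContinuousOn (fun w : Fin 3 → ℝ => (g₁ w / f₀ w, hh w / f₀ w))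
      {w : Fin 3 → ℝ | f₀ w ≠ 0} := by
    apply ContinuousOn.prodMk
    · exact ContinuousOn.div g₁.continuous.continuousOn f₀.continuous.continuousOn fun w hw => hw
    · exact ContinuousOn.div hh.continuous.continuousOn f₀.continuous.continuousOn fun w hw => hw
  have := hcont.isOpen_inter_preimage hopen hW
  exact this

-- closedness of the angle sets
lemma closed_S {A : Set (Proj 2)} (hA : IsClosed A) (φ ψ : (Fin 3 → ℝ) →L[ℝ] ℝ) :
    IsClosed {θ : ℝ | ∃ x ∈ A, Real.cos θ * φ x.rep + Real.sin θ * ψ x.rep = 0} := by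
  haveI : CompactSpace ↥(Kset A) := isCompact_iff_compactSpace.1 (Kset_compact hA)
  have happ : ∀ (θ : ℝ) (w : Fin 3 → ℝ),
      (Real.cos θ • φ + Real.sin θ • ψ) w = Real.cos θ * φ w + Real.sin θ * ψ w := by
    intro θ w
    simp [ContinuousLinearMap.add_apply, ContinuousLinearMap.smul_apply, smul_eq_mul]
  have heq : {θ : ℝ | ∃ x ∈ A, Real.cos θ * φ x.rep + Real.sin θ * ψ x.rep = 0} =
      Prod.snd '' {q : ↥(Kset A) × ℝ |
        Real.cos q.2 * φ (q.1 : Fin 3 → ℝ) + Real.sin q.2 * ψ (q.1 : Fin 3 → ℝ) = 0} := by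
    ext θ
    simp only [Set.mem_setOf_eq, Set.mem_image]
    constructor
    · intro hθ
      have : ∃ x ∈ A, (Real.cos θ • φ + Real.sin θ • ψ) x.rep = 0 := by
        obtain ⟨x, hx, hx0⟩ := hθ
        exact ⟨x, hx, by rw [happ]; exact hx0⟩
      obtain ⟨v, hvK, hv0⟩ := (Kset_spec (A := A) (Real.cos θ • φ + Real.sin θ • ψ)).2 this
      exact ⟨⟨⟨v, hvK⟩, θ⟩, by rw [← happ]; exact hv0, rfl⟩
    · rintro ⟨⟨v, θ'⟩, hq, rfl⟩
      have : ∃ x ∈ A, (Real.cos θ' • φ + Real.sin θ' • ψ) x.rep = 0 :=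
        (Kset_spec (A := A) _).1 ⟨v.1, v.2, by rw [happ]; exact hq⟩
      obtain ⟨x, hx, hx0⟩ := this
      exact ⟨x, hx, by rw [← happ]; exact hx0⟩
  rw [heq]
  apply isClosedMap_snd_of_compactSpace
  apply isClosed_eq _ continuous_const
  apply Continuous.add
  · exact (Real.continuous_cos.comp continuous_snd).mul
      (φ.continuous.comp (continuous_subtype_val.comp continuous_fst))
  · exact (Real.continuous_sin.comp continuous_snd).mul
      (ψ.continuous.comp (continuous_subtype_val.comp continuous_fst))

lemma exists_cos_sin {x y : ℝ} (h : x ^ 2 + y ^ 2 = 1) :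
    ∃ θ : ℝ, Real.cos θ = x ∧ Real.sin θ = y := by
  have hx1 : -1 ≤ x := by nlinarith [sq_nonneg y]
  have hx2 : x ≤ 1 := by nlinarith [sq_nonneg y]
  rcases le_or_gt 0 y with hy | hy
  · refine ⟨Real.arccos x, Real.cos_arccos hx1 hx2, ?_⟩
    rw [Real.sin_arccos, show (1:ℝ) - x ^ 2 = y ^ 2 by linarith, Real.sqrt_sq hy]
  · refine ⟨-Real.arccos x, by rw [Real.cos_neg]; exact Real.cos_arccos hx1 hx2, ?_⟩
    rw [Real.sin_neg, Real.sin_arccos, show (1:ℝ) - x ^ 2 = y ^ 2 by linarith,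
      Real.sqrt_sq_eq_abs, abs_of_neg hy, neg_neg]

-- ordering of disjoint preconnected subsets of ℝ
lemma order_lemma {I₁ I₂ : Set ℝ} (h₁ : IsPreconnected I₁) (h₂ : IsPreconnected I₂)
    (hd : ∀ x, x ∈ I₁ → x ∈ I₂ → False) :
    (∀ a ∈ I₁, ∀ b ∈ I₂, a < b) ∨ (∀ a ∈ I₂, ∀ b ∈ I₁, a < b) := by
  by_contra hcon
  push_neg at hcon
  obtain ⟨⟨a₁, ha₁, b₂, hb₂, h1⟩, ⟨a₂, ha₂, b₁, hb₁, h2⟩⟩ := hcon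
  -- h1 : b₂ ≤ a₁ with a₁ ∈ I₁, b₂ ∈ I₂ ; h2 : b₁ ≤ a₂ with a₂ ∈ I₂, b₁ ∈ I₁
  have o₁ := h₁.ordConnected
  have o₂ := h₂.ordConnected
  have hb₂a₂ : b₂ ≤ a₂ := by
    by_contra h
    push_neg at h
    exact hd b₂ (o₁.out hb₁ ha₁ ⟨le_trans h2 (le_of_lt h), h1⟩) hb₂
  have hb₁a₁ : b₁ ≤ a₁ := by
    by_contra h
    push_neg at h
    exact hd b₁ hb₁ (o₂.out hb₂ ha₂ ⟨le_trans h1 (le_of_lt h), h2⟩)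
  have hm₁ : max b₁ b₂ ∈ I₁ := o₁.out hb₁ ha₁ ⟨le_max_left _ _, max_le hb₁a₁ h1⟩
  have hm₂ : max b₁ b₂ ∈ I₂ := o₂.out hb₂ ha₂ ⟨le_max_right _ _, max_le h2 hb₂a₂⟩
  exact hd _ hm₁ hm₂

-- core analytic bitangent lemma
lemma core_lemma (C₁ C₂ : Set (ℝ × ℝ)) (hc₁ : IsCompact C₁) (hc₂ : IsCompact C₂)
    (hn₁ : C₁.Nonempty) (hn₂ : C₂.Nonempty)
    (hlt : ∀ q₁ ∈ C₁, ∀ q₂ ∈ C₂, q₁.1 < q₂.1) :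
    ∃ t c : ℝ, (∀ q ∈ C₁, q.2 - t * q.1 ≤ c) ∧ (∀ q ∈ C₂, q.2 - t * q.1 ≤ c) ∧
      (∃ q ∈ C₁, q.2 - t * q.1 = c) ∧ (∃ q ∈ C₂, q.2 - t * q.1 = c) := by
  set g : ℝ → ℝ × ℝ → ℝ := fun t q => q.2 - t * q.1 with hg
  have hgc : ∀ t : ℝ, Continuous (g t) := fun t => by
    apply Continuous.sub continuous_snd (continuous_const.mul continuous_fst)
  have key : ∀ C : Set (ℝ × ℝ), IsCompact C → C.Nonempty → ∀ t : ℝ,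
      (∀ q ∈ C, g t q ≤ sSup (g t '' C)) ∧ (∃ q ∈ C, g t q = sSup (g t '' C)) := by
    intro C hC hne t
    have himg : IsCompact (g t '' C) := hC.image (hgc t)
    refine ⟨fun q hq => le_csSup himg.bddAbove ⟨q, hq, rfl⟩, ?_⟩
    obtain ⟨q, hq, hgq⟩ := himg.sSup_mem (hne.image _)
    exact ⟨q, hq, hgq⟩
  have cont : ∀ C : Set (ℝ × ℝ), IsCompact C → C.Nonempty →
      Continuous (fun t => sSup (g t '' C)) := by
    intro C hC hne
    obtain ⟨M, hM⟩ : ∃ M : ℝ, ∀ q ∈ C, |q.1| ≤ M := by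
      have himg : IsCompact ((fun q : ℝ × ℝ => |q.1|) '' C) :=
        hC.image (continuous_fst.abs)
      obtain ⟨M, hM⟩ := himg.bddAbove
      exact ⟨M, fun q hq => hM ⟨q, hq, rfl⟩⟩
    obtain ⟨q0, hq0⟩ := id hne
    have hM0 : 0 ≤ M := le_trans (abs_nonneg _) (hM q0 hq0)
    have step : ∀ t t' : ℝ, sSup (g t '' C) ≤ sSup (g t' '' C) + M * |t - t'| := by
      intro t t'
      apply csSup_le (hne.image _)
      rintro a ⟨q, hq, rfl⟩
      have h1 : g t q = g t' q + (t' - t) * q.1 := by simp only [hg]; ring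
      have h2 : (t' - t) * q.1 ≤ M * |t - t'| :=
        calc (t' - t) * q.1 ≤ |(t' - t) * q.1| := le_abs_self _
          _ = |t - t'| * |q.1| := by rw [abs_mul, abs_sub_comm]
          _ ≤ |t - t'| * M := mul_le_mul_of_nonneg_left (hM q hq) (abs_nonneg _)
          _ = M * |t - t'| := mul_comm _ _
      have h3 : g t' q ≤ sSup (g t' '' C) := (key C hC hne t').1 q hq
      linarith
    have hlip : LipschitzWith (Real.toNNReal M) (fun t => sSup (g t '' C)) := by
      apply LipschitzWith.of_dist_le_mul
      intro t t'
      rw [Real.dist_eq, Real.dist_eq, Real.coe_toNNReal M hM0]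
      have c1 := step t t'
      have c2 := step t' t
      rw [abs_sub_comm t' t] at c2
      rw [abs_le]
      constructor <;> linarith
    exact hlip.continuous
  obtain ⟨qb, hqb, hqbmax⟩ := hc₁.exists_isMaxOn hn₁ continuous_fst.continuousOn
  obtain ⟨qa, hqa, hqamin⟩ := hc₂.exists_isMinOn hn₂ continuous_fst.continuousOn
  obtain ⟨q1, hq1, hq1max⟩ := hc₁.exists_isMaxOn hn₁ continuous_snd.continuousOn
  obtain ⟨q2, hq2, hq2max⟩ := hc₂.exists_isMaxOn hn₂ continuous_snd.continuousOn
  have hδ : qb.1 < qa.1 := hlt qb hqb qa hqa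
  have hδ' : (0:ℝ) < qa.1 - qb.1 := by linarith
  set d : ℝ → ℝ := fun t => sSup (g t '' C₁) - sSup (g t '' C₂) with hd
  have hdc : Continuous d := (cont C₁ hc₁ hn₁).sub (cont C₂ hc₂ hn₂)
  set T : ℝ := max 0 ((q2.2 - qb.2 + 1) / (qa.1 - qb.1)) with hT
  set T' : ℝ := min 0 (-(q1.2 - qa.2 + 1) / (qa.1 - qb.1)) with hT'
  have hTnn : 0 ≤ T := le_max_left _ _
  have hT'np : T' ≤ 0 := min_le_left _ _
  have hdT : 1 ≤ d T := by
    have hs2 : sSup (g T '' C₂) ≤ q2.2 - T * qa.1 := by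
      apply csSup_le (hn₂.image _)
      rintro a ⟨q, hq, rfl⟩
      have e1 : q.2 ≤ q2.2 := hq2max hq
      have e2 : T * qa.1 ≤ T * q.1 := mul_le_mul_of_nonneg_left (hqamin hq) hTnn
      simp only [hg]; linarith
    have hs1 : qb.2 - T * qb.1 ≤ sSup (g T '' C₁) := (key C₁ hc₁ hn₁ T).1 qb hqb
    have hTbig : q2.2 - qb.2 + 1 ≤ T * (qa.1 - qb.1) := by
      have := le_max_right (0:ℝ) ((q2.2 - qb.2 + 1) / (qa.1 - qb.1))
      calc q2.2 - qb.2 + 1 = ((q2.2 - qb.2 + 1) / (qa.1 - qb.1)) * (qa.1 - qb.1) := by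
            field_simp
        _ ≤ T * (qa.1 - qb.1) := mul_le_mul_of_nonneg_right this (le_of_lt hδ')
    simp only [hd]; nlinarith
  have hdT' : d T' ≤ -1 := by
    have hs1 : sSup (g T' '' C₁) ≤ q1.2 - T' * qb.1 := by
      apply csSup_le (hn₁.image _)
      rintro a ⟨q, hq, rfl⟩
      have e1 : q.2 ≤ q1.2 := hq1max hq
      have e2 : T' * qb.1 ≤ T' * q.1 := mul_le_mul_of_nonpos_left (hqbmax hq) hT'np
      simp only [hg]; linarith
    have hs2 : qa.2 - T' * qa.1 ≤ sSup (g T' '' C₂) := (key C₂ hc₂ hn₂ T').1 qa hqa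
    have hTbig : T' * (qa.1 - qb.1) ≤ -(q1.2 - qa.2 + 1) := by
      have hle := min_le_right (0:ℝ) (-(q1.2 - qa.2 + 1) / (qa.1 - qb.1))
      calc T' * (qa.1 - qb.1) ≤ (-(q1.2 - qa.2 + 1) / (qa.1 - qb.1)) * (qa.1 - qb.1) :=
            mul_le_mul_of_nonneg_right hle (le_of_lt hδ')
        _ = -(q1.2 - qa.2 + 1) := by field_simp
    simp only [hd]; nlinarith
  have hTT' : T' ≤ T := le_trans hT'np hTnn
  have hIVT := intermediate_value_Icc hTT' hdc.continuousOn
  obtain ⟨t, _, ht⟩ := hIVT (show (0:ℝ) ∈ Set.Icc (d T') (d T) from ⟨by linarith, by linarith⟩)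
  refine ⟨t, sSup (g t '' C₁), ?_, ?_, ?_, ?_⟩
  · exact (key C₁ hc₁ hn₁ t).1
  · intro q hq
    have := (key C₂ hc₂ hn₂ t).1 q hq
    have he : sSup (g t '' C₂) = sSup (g t '' C₁) := by
      have : d t = 0 := ht
      simp only [hd] at this; linarith
    rw [he] at this; exact this
  · exact (key C₁ hc₁ hn₁ t).2
  · obtain ⟨q, hq, hqe⟩ := (key C₂ hc₂ hn₂ t).2
    refine ⟨q, hq, ?_⟩
    have hqe' : q.2 - t * q.1 = sSup (g t '' C₂) := hqe
    rw [hqe']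
    have : d t = 0 := ht
    simp only [hd] at this; linarith

set_option maxHeartbeats 1000000 in
set_option synthInstance.maxHeartbeats 200000 in
/-- Evaluation at a vector, as a linear map on continuous linear forms. -/
def evu (u : Fin 3 → ℝ) : ((Fin 3 → ℝ) →L[ℝ] ℝ) →ₗ[ℝ] ℝ where
  toFun f := f u
  map_add' f g := rfl
  map_smul' c f := rfl

@[simp] lemma evu_apply (u : Fin 3 → ℝ) (f : (Fin 3 → ℝ) →L[ℝ] ℝ) : evu u f = f u := rfl

set_option maxHeartbeats 1000000 in
set_option synthInstance.maxHeartbeats 200000 in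
/-- Evaluation at a vector, as a linear map on a submodule of continuous linear forms. -/
def evSub (N : Submodule ℝ ((Fin 3 → ℝ) →L[ℝ] ℝ)) (w : Fin 3 → ℝ) : ↥N →ₗ[ℝ] ℝ where
  toFun f := (f : (Fin 3 → ℝ) →L[ℝ] ℝ) w
  map_add' f g := rfl
  map_smul' c f := rfl

set_option maxHeartbeats 1600000 in
set_option synthInstance.maxHeartbeats 400000 in
/-- Two disjoint closed connected subsets of the real projective plane admitting a point `p`
through which no line meets both of them have a common supporting line. -/
theorem exists_common_supporting_line (A₁ A₂ : Set (Proj 2))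
    (h₁cl : IsClosed A₁) (h₂cl : IsClosed A₂) (h₁c : IsConnected A₁) (h₂c : IsConnected A₂)
    (hdisj : Disjoint A₁ A₂) (p : Proj 2)
    (hp : ¬ ∃ f : (Fin 3 → ℝ) →L[ℝ] ℝ, f ≠ 0 ∧ f p.rep = 0 ∧
      (∃ x ∈ A₁, f x.rep = 0) ∧ (∃ x ∈ A₂, f x.rep = 0)) :
    ∃ f : (Fin 3 → ℝ) →L[ℝ] ℝ, f ≠ 0 ∧
      ∃ x₁ x₂, SupportsAt f A₁ x₁ ∧ SupportsAt f A₂ x₂ := by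
  classical
  have hune : p.rep ≠ 0 := p.rep_nonzero
  obtain ⟨j, hj⟩ : ∃ j, p.rep j ≠ 0 := by
    by_contra h; push_neg at h; exact hune (funext h)
  set hh : (Fin 3 → ℝ) →L[ℝ] ℝ := ContinuousLinearMap.proj j with hhdef
  have hhu : hh p.rep ≠ 0 := hj
  haveI hFD : FiniteDimensional ℝ ((Fin 3 → ℝ) →L[ℝ] ℝ) :=
    LinearEquiv.finiteDimensional
      (LinearMap.toContinuousLinearMap : ((Fin 3 → ℝ) →ₗ[ℝ] ℝ) ≃ₗ[ℝ] ((Fin 3 → ℝ) →L[ℝ] ℝ))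
  have hD3 : Module.finrank ℝ ((Fin 3 → ℝ) →L[ℝ] ℝ) = 3 := by
    rw [← LinearEquiv.finrank_eq
      (LinearMap.toContinuousLinearMap : ((Fin 3 → ℝ) →ₗ[ℝ] ℝ) ≃ₗ[ℝ] ((Fin 3 → ℝ) →L[ℝ] ℝ))]
    rw [Module.finrank_linearMap, Module.finrank_self, Module.finrank_fin_fun]
  set N : Submodule ℝ ((Fin 3 → ℝ) →L[ℝ] ℝ) := LinearMap.ker (evu p.rep) with hNdef
  have memN : ∀ f : ↥N, (f : (Fin 3 → ℝ) →L[ℝ] ℝ) p.rep = 0 := fun f => LinearMap.mem_ker.1 f.2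
  have hN2 : Module.finrank ℝ ↥N = 2 := by
    have hsurj : LinearMap.range (evu p.rep) = ⊤ := by
      rw [LinearMap.range_eq_top]
      intro r
      refine ⟨(r * (p.rep j)⁻¹) • hh, ?_⟩
      have h1 : evu p.rep ((r * (p.rep j)⁻¹) • hh) = (r * (p.rep j)⁻¹) * hh p.rep := rfl
      have h2 : hh p.rep = p.rep j := rfl
      rw [h1, h2]; field_simp
    have hsum := LinearMap.finrank_range_add_finrank_ker (evu p.rep)
    rw [hsurj, finrank_top, Module.finrank_self, hD3, ← hNdef] at hsum
    omega
  have hvan : ∀ w : Fin 3 → ℝ, ∃ f : ↥N, f ≠ 0 ∧ (f : (Fin 3 → ℝ) →L[ℝ] ℝ) w = 0 := by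
    intro w
    by_contra hcon
    push_neg at hcon
    have hker : LinearMap.ker (evSub N w) = ⊥ := by
      rw [Submodule.eq_bot_iff]
      intro f hf
      by_contra hne
      exact hcon f hne (LinearMap.mem_ker.1 hf)
    have hinj : Function.Injective (evSub N w) := by
      intro a b hab
      change (a : (Fin 3 → ℝ) →L[ℝ] ℝ) w = (b : (Fin 3 → ℝ) →L[ℝ] ℝ) w at hab
      by_contra hne
      apply hcon (a - b) (sub_ne_zero.2 hne)
      rw [Submodule.coe_sub, ContinuousLinearMap.sub_apply, hab, sub_self]
    have hle := LinearMap.finrank_le_finrank_of_injective hinj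
    rw [hN2, Module.finrank_self] at hle
    omega
  -- a basis of the 2-dimensional annihilator of p
  haveI hfree : Module.Free ℝ ↥N := Module.Free.of_divisionRing ℝ ↥N
  obtain ⟨bas⟩ : Nonempty (Module.Basis (Fin 2) ℝ ↥N) :=
    ⟨Module.finBasisOfFinrankEq ℝ ↥N hN2⟩
  set φ : (Fin 3 → ℝ) →L[ℝ] ℝ := (bas 0 : (Fin 3 → ℝ) →L[ℝ] ℝ) with hφdef
  set ψ : (Fin 3 → ℝ) →L[ℝ] ℝ := (bas 1 : (Fin 3 → ℝ) →L[ℝ] ℝ) with hψdef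
  have hφu : φ p.rep = 0 := memN _
  have hψu : ψ p.rep = 0 := memN _
  have hindep : ∀ a b : ℝ, a • φ + b • ψ = 0 → a = 0 ∧ b = 0 := by
    intro a b hab
    have h0 : a • bas 0 + b • bas 1 = 0 := by
      apply Subtype.ext
      simpa using hab
    have ha : a = 0 := by
      have h1 := congrArg (fun g : ↥N => (bas.repr g) 0) h0
      simpa [map_add, map_smul, Finsupp.add_apply, Finsupp.smul_apply, Module.Basis.repr_self,
        Finsupp.single_apply] using h1
    have hb : b = 0 := by
      have h1 := congrArg (fun g : ↥N => (bas.repr g) 1) h0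
      simpa [map_add, map_smul, Finsupp.add_apply, Finsupp.smul_apply, Module.Basis.repr_self,
        Finsupp.single_apply] using h1
    exact ⟨ha, hb⟩
  have hcoords : ∀ f : ↥N, ∀ v : Fin 3 → ℝ,
      (f : (Fin 3 → ℝ) →L[ℝ] ℝ) v = (bas.repr f 0) * φ v + (bas.repr f 1) * ψ v := by
    intro f v
    have h := bas.sum_repr f
    rw [Fin.sum_univ_two] at h
    have h2 := congrArg (fun g : ↥N => (g : (Fin 3 → ℝ) →L[ℝ] ℝ) v) h
    simpa [ContinuousLinearMap.add_apply, ContinuousLinearMap.smul_apply, smul_eq_mul]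
      using h2.symm
  -- the angle sets
  set S₁ : Set ℝ := {θ : ℝ | ∃ x ∈ A₁, Real.cos θ * φ x.rep + Real.sin θ * ψ x.rep = 0}
    with hS₁def
  set S₂ : Set ℝ := {θ : ℝ | ∃ x ∈ A₂, Real.cos θ * φ x.rep + Real.sin θ * ψ x.rep = 0}
    with hS₂def
  have happ : ∀ (a b : ℝ) (w : Fin 3 → ℝ),
      (a • φ + b • ψ) w = a * φ w + b * ψ w := by
    intro a b w
    simp [ContinuousLinearMap.add_apply, ContinuousLinearMap.smul_apply, smul_eq_mul]
  have hfθne : ∀ θ : ℝ, Real.cos θ • φ + Real.sin θ • ψ ≠ 0 := by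
    intro θ h
    obtain ⟨h1, h2⟩ := hindep _ _ h
    have := Real.sin_sq_add_cos_sq θ
    rw [h1, h2] at this
    norm_num at this
  have hSne : ∀ (A : Set (Proj 2)), A.Nonempty → ∃ θ, θ ∈
      {θ : ℝ | ∃ x ∈ A, Real.cos θ * φ x.rep + Real.sin θ * ψ x.rep = 0} := by
    rintro A ⟨x, hx⟩
    obtain ⟨f, hfne, hfx⟩ := hvan x.rep
    set a : ℝ := bas.repr f 0 with hadef
    set b : ℝ := bas.repr f 1 with hbdef
    have hab : ¬ (a = 0 ∧ b = 0) := by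
      rintro ⟨ha, hb⟩
      apply hfne
      have h := bas.sum_repr f
      rw [Fin.sum_univ_two, ← hadef, ← hbdef, ha, hb] at h
      rw [← h]
      simp
    set r : ℝ := Real.sqrt (a ^ 2 + b ^ 2) with hrdef
    have hr2 : a ^ 2 + b ^ 2 > 0 := by
      rcases eq_or_ne a 0 with ha | ha
      · have hb : b ≠ 0 := fun hb => hab ⟨ha, hb⟩
        positivity
      · positivity
    have hr : r > 0 := Real.sqrt_pos.2 hr2
    have hr2' : r ^ 2 = a ^ 2 + b ^ 2 := Real.sq_sqrt (le_of_lt hr2)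
    obtain ⟨θ, hcos, hsin⟩ := exists_cos_sin (x := a / r) (y := b / r) (by
      field_simp
      linarith)
    refine ⟨θ, x, hx, ?_⟩
    rw [hcos, hsin]
    have hf := hcoords f x.rep
    rw [hfx] at hf
    field_simp
    linarith [hf.symm]
  have hSdisj : ∀ θ, θ ∈ S₁ → θ ∈ S₂ → False := by
    intro θ h1 h2
    apply hp
    refine ⟨Real.cos θ • φ + Real.sin θ • ψ, hfθne θ, ?_, ?_, ?_⟩
    · rw [happ, hφu, hψu]; ring
    · obtain ⟨x, hx, hx0⟩ := h1
      exact ⟨x, hx, by rw [happ]; exact hx0⟩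
    · obtain ⟨x, hx, hx0⟩ := h2
      exact ⟨x, hx, by rw [happ]; exact hx0⟩
  obtain ⟨θ₀, hθ₀⟩ : ∃ θ₀ : ℝ, θ₀ ∉ S₁ ∪ S₂ := by
    by_contra hcon
    push_neg at hcon
    have hsub : Set.univ ⊆ S₁ ∪ S₂ := fun θ _ => hcon θ
    obtain ⟨θ, -, hθ₁, hθ₂⟩ := isPreconnected_closed_iff.1 isPreconnected_univ
      S₁ S₂ (closed_S h₁cl φ ψ) (closed_S h₂cl φ ψ) hsub
      (by obtain ⟨θ, hθ⟩ := hSne A₁ h₁c.nonempty; exact ⟨θ, Set.mem_univ θ, hθ⟩)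
      (by obtain ⟨θ, hθ⟩ := hSne A₂ h₂c.nonempty; exact ⟨θ, Set.mem_univ θ, hθ⟩)
    exact hSdisj θ hθ₁ hθ₂
  set f₀ : (Fin 3 → ℝ) →L[ℝ] ℝ := Real.cos θ₀ • φ + Real.sin θ₀ • ψ with hf₀def
  set g₁ : (Fin 3 → ℝ) →L[ℝ] ℝ := (-Real.sin θ₀) • φ + Real.cos θ₀ • ψ with hg₁def
  have hf₀u : f₀ p.rep = 0 := by rw [hf₀def, happ, hφu, hψu]; ring
  have hg₁u : g₁ p.rep = 0 := by rw [hg₁def, happ, hφu, hψu]; ring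
  have hf₀A₁ : ∀ x ∈ A₁, f₀ x.rep ≠ 0 := by
    intro x hx h
    exact hθ₀ (Set.mem_union_left _ ⟨x, hx, by rw [← happ]; exact h⟩)
  have hf₀A₂ : ∀ x ∈ A₂, f₀ x.rep ≠ 0 := by
    intro x hx h
    exact hθ₀ (Set.mem_union_right _ ⟨x, hx, by rw [← happ]; exact h⟩)
  have hg₁ : ∀ c : ℝ, g₁ ≠ c • f₀ := by
    intro c hc
    have hzero : (-Real.sin θ₀ - c * Real.cos θ₀) • φ + (Real.cos θ₀ - c * Real.sin θ₀) • ψ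
        = 0 := by
      have heq : (-Real.sin θ₀ - c * Real.cos θ₀) • φ + (Real.cos θ₀ - c * Real.sin θ₀) • ψ
          = g₁ - c • f₀ := by
        rw [hg₁def, hf₀def]
        module
      rw [heq, hc, sub_self]
    obtain ⟨h1, h2⟩ := hindep _ _ hzero
    have hpy := Real.sin_sq_add_cos_sq θ₀
    have hcomb : Real.cos θ₀ * (Real.cos θ₀ - c * Real.sin θ₀)
        - Real.sin θ₀ * (-Real.sin θ₀ - c * Real.cos θ₀)
        = Real.sin θ₀ ^ 2 + Real.cos θ₀ ^ 2 := by ring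
    rw [h1, h2, hpy] at hcomb
    norm_num at hcomb
  set Φ : Proj 2 → ℝ × ℝ := fun x =>
    (g₁ x.rep / f₀ x.rep, hh x.rep / f₀ x.rep) with hΦdef
  have hΦc : ContinuousOn Φ {x : Proj 2 | f₀ x.rep ≠ 0} := continuousOn_ratio _ _ _
  have hsub₁ : A₁ ⊆ {x : Proj 2 | f₀ x.rep ≠ 0} := fun x hx => hf₀A₁ x hx
  have hsub₂ : A₂ ⊆ {x : Proj 2 | f₀ x.rep ≠ 0} := fun x hx => hf₀A₂ x hx
  set C₁ : Set (ℝ × ℝ) := Φ '' A₁ with hC₁def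
  set C₂ : Set (ℝ × ℝ) := Φ '' A₂ with hC₂def
  have hC₁comp : IsCompact C₁ := (h₁cl.isCompact).image_of_continuousOn (hΦc.mono hsub₁)
  have hC₂comp : IsCompact C₂ := (h₂cl.isCompact).image_of_continuousOn (hΦc.mono hsub₂)
  have hC₁ne : C₁.Nonempty := h₁c.nonempty.image _
  have hC₂ne : C₂.Nonempty := h₂c.nonempty.image _
  have hI₁ : IsPreconnected (Prod.fst '' C₁) :=
    ((h₁c.image Φ (hΦc.mono hsub₁)).image Prod.fst continuous_fst.continuousOn).isPreconnected
  have hI₂ : IsPreconnected (Prod.fst '' C₂) :=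
    ((h₂c.image Φ (hΦc.mono hsub₂)).image Prod.fst continuous_fst.continuousOn).isPreconnected
  have hdisjI : ∀ c : ℝ, c ∈ Prod.fst '' C₁ → c ∈ Prod.fst '' C₂ → False := by
    rintro c ⟨q₁, ⟨x₁, hx₁, rfl⟩, hc₁⟩ ⟨q₂, ⟨x₂, hx₂, rfl⟩, hc₂⟩
    have hβ₁ := hf₀A₁ x₁ hx₁
    have hβ₂ := hf₀A₂ x₂ hx₂
    simp only [hΦdef] at hc₁ hc₂
    rw [div_eq_iff hβ₁] at hc₁
    rw [div_eq_iff hβ₂] at hc₂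
    apply hp
    refine ⟨g₁ - c • f₀, ?_, ?_, ⟨x₁, hx₁, ?_⟩, ⟨x₂, hx₂, ?_⟩⟩
    · intro h; exact hg₁ c (by rwa [sub_eq_zero] at h)
    · simp [ContinuousLinearMap.sub_apply, ContinuousLinearMap.smul_apply, hf₀u, hg₁u]
    · simp [ContinuousLinearMap.sub_apply, ContinuousLinearMap.smul_apply, hc₁]
    · simp [ContinuousLinearMap.sub_apply, ContinuousLinearMap.smul_apply, hc₂]
  have final : ∀ t c : ℝ,
      (∀ q ∈ C₁, q.2 - t * q.1 ≤ c) → (∀ q ∈ C₂, q.2 - t * q.1 ≤ c) →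
      (∃ q ∈ C₁, q.2 - t * q.1 = c) → (∃ q ∈ C₂, q.2 - t * q.1 = c) →
      ∃ f : (Fin 3 → ℝ) →L[ℝ] ℝ, f ≠ 0 ∧
        ∃ x₁ x₂, SupportsAt f A₁ x₁ ∧ SupportsAt f A₂ x₂ := by
    intro t c hb₁ hb₂ ht₁ ht₂
    set f : (Fin 3 → ℝ) →L[ℝ] ℝ := hh - t • g₁ - c • f₀ with hfdef
    have hfu : f p.rep = hh p.rep := by
      simp [hfdef, ContinuousLinearMap.sub_apply, ContinuousLinearMap.smul_apply, hg₁u, hf₀u]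
    have hfne : f ≠ 0 := by
      intro h; apply hhu; rw [← hfu, h]; rfl
    have hmul : ∀ y : Proj 2, f₀ y.rep ≠ 0 →
        f y.rep = ((Φ y).2 - t * (Φ y).1 - c) * f₀ y.rep := by
      intro y hy
      simp only [hfdef, hΦdef, ContinuousLinearMap.sub_apply, ContinuousLinearMap.smul_apply,
        smul_eq_mul]
      field_simp
    have hsupp : ∀ A : Set (Proj 2), (∀ x ∈ A, f₀ x.rep ≠ 0) →
        (∀ q ∈ Φ '' A, q.2 - t * q.1 ≤ c) → (∃ q ∈ Φ '' A, q.2 - t * q.1 = c) →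
        ∃ x, SupportsAt f A x := by
      intro A hA hbA htA
      obtain ⟨q, ⟨x, hx, rfl⟩, hqe⟩ := htA
      refine ⟨x, hx, ?_, f₀, hA x hx, hA, Or.inr ?_⟩
      · rw [hmul x (hA x hx), show (Φ x).2 - t * (Φ x).1 - c = 0 from by rw [← hqe]; ring,
          zero_mul]
      · intro y hy
        rw [hmul y (hA y hy)]
        have h5 : (Φ y).2 - t * (Φ y).1 - c ≤ 0 := sub_nonpos.2 (hbA (Φ y) ⟨y, hy, rfl⟩)
        calc ((Φ y).2 - t * (Φ y).1 - c) * f₀ y.rep * f₀ y.rep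
            = ((Φ y).2 - t * (Φ y).1 - c) * (f₀ y.rep) ^ 2 := by ring
          _ ≤ 0 := mul_nonpos_iff.2 (Or.inr ⟨h5, sq_nonneg _⟩)
    obtain ⟨x₁, hs₁⟩ := hsupp A₁ hf₀A₁ hb₁ ht₁
    obtain ⟨x₂, hs₂⟩ := hsupp A₂ hf₀A₂ hb₂ ht₂
    exact ⟨f, hfne, x₁, x₂, hs₁, hs₂⟩
  rcases order_lemma hI₁ hI₂ hdisjI with hord | hord
  · obtain ⟨t, c, hb₁, hb₂, ht₁, ht₂⟩ := core_lemma C₁ C₂ hC₁comp hC₂comp hC₁ne hC₂ne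
      (fun q₁ h₁ q₂ h₂ => hord q₁.1 ⟨q₁, h₁, rfl⟩ q₂.1 ⟨q₂, h₂, rfl⟩)
    exact final t c hb₁ hb₂ ht₁ ht₂
  · obtain ⟨t, c, hb₂, hb₁, ht₂, ht₁⟩ := core_lemma C₂ C₁ hC₂comp hC₁comp hC₂ne hC₁ne
      (fun q₁ h₁ q₂ h₂ => hord q₁.1 ⟨q₁, h₁, rfl⟩ q₂.1 ⟨q₂, h₂, rfl⟩)
    exact final t c hb₁ hb₂ ht₁ ht₂
end

section
/- Main theorem: Let A₁, …, A_n be non-empty closed connected subsets of ℙ^n(ℝ), and assume there exists a point p ∈ ℙ^n(ℝ) such that no hyperplane passing through p meets every Aᵢ. Then there exists a hyperplane H of ℙ^n(ℝ) and points xᵢ ∈ Aᵢ (1 ≤ i ≤ n) such that H is a supporting hyperplane of Aᵢ at xᵢ for each i; i.e., xᵢ ∈ Aᵢ ∩ H and, in some affine chart containing xᵢ, Aᵢ lies in one of the two closed half-spaces determined by H. -/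
open scoped Topology


variable {n : ℕ}

/-- The quotient map. -/
noncomputable def pj (v : {v : Fin (n+1) → ℝ // v ≠ 0}) : Proj n := Projectivization.mk ℝ v.1 v.2

lemma continuous_pj : Continuous (pj (n := n)) :=
  continuous_quotient_mk'

lemma surjective_pj : Function.Surjective (pj (n := n)) :=
  fun x => ⟨⟨x.rep, x.rep_nonzero⟩, x.mk_rep⟩

lemma pj_eq_iff (v w : {v : Fin (n+1) → ℝ // v ≠ 0}) :
    pj v = pj w ↔ ∃ a : ℝˣ, (a : ℝ) • w.1 = v.1 :=
  Projectivization.mk_eq_mk_iff ℝ v.1 w.1 v.2 w.2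

lemma isOpenMap_pj : IsOpenMap (pj (n := n)) := by
  intro W hW
  have hq : IsOpen (pj ⁻¹' (pj '' W)) → IsOpen (pj '' W) := by
    intro h
    exact (isQuotientMap_quotient_mk'.isOpen_preimage).mp h
  apply hq
  have : pj ⁻¹' (pj '' W) = ⋃ (t : ℝˣ),
      (fun v : {v : Fin (n+1) → ℝ // v ≠ 0} =>
        (⟨(t : ℝ) • v.1, smul_ne_zero t.ne_zero v.2⟩ : {v : Fin (n+1) → ℝ // v ≠ 0})) ⁻¹' W := by
    ext v
    simp only [Set.mem_preimage, Set.mem_image, Set.mem_iUnion]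
    constructor
    · rintro ⟨w, hwW, hw⟩
      obtain ⟨a, ha⟩ := (pj_eq_iff w v).mp hw
      refine ⟨a, ?_⟩
      have heq : (⟨((a : ℝˣ) : ℝ) • v.1, smul_ne_zero (Units.ne_zero _) v.2⟩ :
          {v : Fin (n+1) → ℝ // v ≠ 0}) = w := Subtype.ext ha
      exact heq ▸ hwW
    · rintro ⟨t, ht⟩
      exact ⟨_, ht, (pj_eq_iff _ v).mpr ⟨t, rfl⟩⟩
  rw [this]
  exact isOpen_iUnion fun t =>
    hW.preimage (Continuous.subtype_mk (by fun_prop : Continuous fun v : {v : Fin (n+1) → ℝ // v ≠ 0} => (t : ℝ) • v.1) _)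

lemma compactSpace_proj : CompactSpace (Proj n) := by
  rw [← isCompact_univ_iff]
  have h1 : (Set.univ : Set (Proj n)) = pj '' {v | ‖v.1‖ = 1} := by
    refine Set.eq_of_subset_of_subset ?_ (Set.subset_univ _)
    intro x _
    have hx : x.rep ≠ 0 := x.rep_nonzero
    have hn : ‖x.rep‖ ≠ 0 := norm_ne_zero_iff.mpr hx
    refine ⟨⟨‖x.rep‖⁻¹ • x.rep, smul_ne_zero (inv_ne_zero hn) hx⟩, ?_, ?_⟩
    · simp [norm_smul, abs_of_nonneg (norm_nonneg _), inv_mul_cancel₀ hn]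
    · have h2 : pj ⟨‖x.rep‖⁻¹ • x.rep, smul_ne_zero (inv_ne_zero hn) hx⟩
          = pj ⟨x.rep, x.rep_nonzero⟩ :=
        (pj_eq_iff _ _).mpr ⟨Units.mk0 _ (inv_ne_zero hn), rfl⟩
      exact h2.trans x.mk_rep
  rw [h1]
  apply IsCompact.image ?_ continuous_pj
  -- compactness of the unit "sphere" inside the subtype
  have : IsCompact (Subtype.val '' {v : {v : Fin (n+1) → ℝ // v ≠ 0} | ‖v.1‖ = 1}) := by
    have : Subtype.val '' {v : {v : Fin (n+1) → ℝ // v ≠ 0} | ‖v.1‖ = 1}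
        = Metric.sphere (0 : Fin (n+1) → ℝ) 1 := by
      ext v
      simp only [Set.mem_image, Set.mem_setOf_eq, mem_sphere_iff_norm, sub_zero]
      constructor
      · rintro ⟨w, hw, rfl⟩; exact hw
      · intro hv
        have hv0 : v ≠ 0 := by intro h; rw [h] at hv; simp at hv
        exact ⟨⟨v, hv0⟩, hv, rfl⟩
    rw [this]
    exact isCompact_sphere 0 1
  rwa [Topology.IsEmbedding.isCompact_iff Topology.IsEmbedding.subtypeVal]

noncomputable def rho (g : (Fin (n+1) → ℝ) →L[ℝ] ℝ) (v : {v : Fin (n+1) → ℝ // v ≠ 0}) :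
    Fin (n+1) → ℝ :=
  ((|g v.1| / g v.1) * ‖v.1‖⁻¹) • v.1

lemma rho_invariant (g : (Fin (n+1) → ℝ) →L[ℝ] ℝ)
    (a b : {v : Fin (n+1) → ℝ // v ≠ 0}) (t : ℝ) (hab : (a : Fin (n+1) → ℝ) = t • (b : Fin (n+1) → ℝ)) :
    rho g a = rho g b := by
  have ht : t ≠ 0 := by
    rintro rfl
    exact a.2 (by rw [hab, zero_smul])
  have hb0 : (b : Fin (n+1) → ℝ) ≠ 0 := b.2
  have hnb : ‖(b : Fin (n+1) → ℝ)‖ ≠ 0 := norm_ne_zero_iff.mpr hb0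
  unfold rho
  rw [hab, map_smul, smul_eq_mul, norm_smul, smul_smul]
  by_cases hgb : g (b : Fin (n+1) → ℝ) = 0
  · rw [hgb]
    simp
  · congr 1
    rw [abs_mul]
    field_simp
    exact (Real.norm_eq_abs t).symm

noncomputable def tau (g : (Fin (n+1) → ℝ) →L[ℝ] ℝ) : Proj n → (Fin (n+1) → ℝ) :=
  Projectivization.lift (rho g) (fun a b t h => rho_invariant g a b t h)

lemma tau_pj (g : (Fin (n+1) → ℝ) →L[ℝ] ℝ) (v : {v : Fin (n+1) → ℝ // v ≠ 0}) :
    tau g (pj v) = rho g v := rfl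

lemma tau_eq (g : (Fin (n+1) → ℝ) →L[ℝ] ℝ) (x : Proj n) :
    tau g x = rho g ⟨x.rep, x.rep_nonzero⟩ := by
  conv_lhs => rw [← x.mk_rep]
  rfl

/-- the scalar relating `tau g x` and `x.rep`. -/
noncomputable def csc (g : (Fin (n+1) → ℝ) →L[ℝ] ℝ) (x : Proj n) : ℝ :=
  (|g x.rep| / g x.rep) * ‖x.rep‖⁻¹

lemma tau_eq_smul (g : (Fin (n+1) → ℝ) →L[ℝ] ℝ) (x : Proj n) :
    tau g x = csc g x • x.rep := tau_eq g x

lemma csc_mul_g_pos (g : (Fin (n+1) → ℝ) →L[ℝ] ℝ) (x : Proj n) (hgx : g x.rep ≠ 0) :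
    0 < csc g x * g x.rep := by
  have h1 : 0 < |g x.rep| := abs_pos.mpr hgx
  have h2 : 0 < ‖x.rep‖⁻¹ := by
    have := norm_pos_iff.mpr x.rep_nonzero
    positivity
  have key : csc g x * g x.rep = |g x.rep| * ‖x.rep‖⁻¹ := by
    unfold csc
    rw [mul_right_comm, div_mul_cancel₀ _ hgx]
  rw [key]
  positivity

lemma csc_ne_zero (g : (Fin (n+1) → ℝ) →L[ℝ] ℝ) (x : Proj n) (hgx : g x.rep ≠ 0) :
    csc g x ≠ 0 := by
  intro h
  have := csc_mul_g_pos g x hgx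
  rw [h, zero_mul] at this
  exact lt_irrefl 0 this

lemma eval_tau (f g : (Fin (n+1) → ℝ) →L[ℝ] ℝ) (x : Proj n) :
    f (tau g x) = csc g x * f x.rep := by
  rw [tau_eq_smul, map_smul, smul_eq_mul]

lemma eval_tau_eq_zero_iff (f g : (Fin (n+1) → ℝ) →L[ℝ] ℝ) (x : Proj n) (hgx : g x.rep ≠ 0) :
    f (tau g x) = 0 ↔ f x.rep = 0 := by
  rw [eval_tau, mul_eq_zero]
  have := csc_ne_zero g x hgx
  tauto

lemma eval_tau_nonneg_iff (f g : (Fin (n+1) → ℝ) →L[ℝ] ℝ) (x : Proj n) (hgx : g x.rep ≠ 0) :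
    0 ≤ f (tau g x) ↔ 0 ≤ f x.rep * g x.rep := by
  have hpos := csc_mul_g_pos g x hgx
  have hsq : 0 < csc g x * csc g x := mul_self_pos.mpr (csc_ne_zero g x hgx)
  constructor
  · intro h
    have h2 : 0 ≤ f (tau g x) * (csc g x * g x.rep) := mul_nonneg h hpos.le
    rw [eval_tau] at h2
    have h3 : f x.rep * g x.rep = (f (tau g x) * (csc g x * g x.rep)) / (csc g x * csc g x) := by
      rw [eval_tau]
      field_simp [csc_ne_zero g x hgx]
    rw [h3]
    positivity
  · intro h
    rw [eval_tau]
    -- csc * f x.rep ≥ 0 : csc * f = (csc * g) * (f * g) / (g * g)?  use sign reasoning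
    have hg2 : 0 < g x.rep * g x.rep := mul_self_pos.mpr hgx
    have : csc g x * f x.rep = (csc g x * g x.rep) * (f x.rep * g x.rep) / (g x.rep * g x.rep) := by
      field_simp
    rw [this]
    positivity

lemma norm_tau (g : (Fin (n+1) → ℝ) →L[ℝ] ℝ) (x : Proj n) (hgx : g x.rep ≠ 0) :
    ‖tau g x‖ = 1 := by
  rw [tau_eq_smul, norm_smul]
  unfold csc
  have h1 : 0 < |g x.rep| := abs_pos.mpr hgx
  have h2 : 0 < ‖x.rep‖ := norm_pos_iff.mpr x.rep_nonzero
  rw [Real.norm_eq_abs, abs_mul, abs_div, abs_abs, abs_inv, abs_norm]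
  field_simp

lemma tau_ne_zero (g : (Fin (n+1) → ℝ) →L[ℝ] ℝ) (x : Proj n) (hgx : g x.rep ≠ 0) :
    tau g x ≠ 0 := by
  intro h
  have := norm_tau g x hgx
  rw [h] at this
  simp at this

lemma pj_tau (g : (Fin (n+1) → ℝ) →L[ℝ] ℝ) (x : Proj n) (hgx : g x.rep ≠ 0) :
    pj ⟨tau g x, tau_ne_zero g x hgx⟩ = x := by
  have h1 : pj ⟨tau g x, tau_ne_zero g x hgx⟩ = pj ⟨x.rep, x.rep_nonzero⟩ := by
    apply (pj_eq_iff _ _).mpr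
    exact ⟨Units.mk0 _ (csc_ne_zero g x hgx), (tau_eq_smul g x).symm⟩
  exact h1.trans x.mk_rep

lemma continuousOn_tau (g : (Fin (n+1) → ℝ) →L[ℝ] ℝ) :
    ContinuousOn (tau g) {x : Proj n | g x.rep ≠ 0} := by
  intro x hx
  apply ContinuousAt.continuousWithinAt
  intro N hN
  rw [Filter.mem_map]
  obtain ⟨N', hsub, hN'o, hmemN'⟩ := mem_nhds_iff.mp hN
  set Wg : Set {v : Fin (n+1) → ℝ // v ≠ 0} := {v | g v.1 ≠ 0} with hWg
  have hWgopen : IsOpen Wg := by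
    have : Continuous fun v : {v : Fin (n+1) → ℝ // v ≠ 0} => g v.1 :=
      g.continuous.comp continuous_subtype_val
    exact isOpen_compl_singleton.preimage this
  have hrho : ContinuousOn (rho g) Wg := by
    show ContinuousOn (fun v : {v : Fin (n+1) → ℝ // v ≠ 0} => ((|g v.1| / g v.1) * ‖v.1‖⁻¹) • v.1) Wg
    apply ContinuousOn.smul (f := fun v : {v : Fin (n+1) → ℝ // v ≠ 0} => (|g v.1| / g v.1) * ‖v.1‖⁻¹) ?_ continuous_subtype_val.continuousOn
    apply ContinuousOn.mul
    · apply ContinuousOn.div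
      · exact ((continuous_abs.comp (g.continuous.comp continuous_subtype_val))).continuousOn
      · exact (g.continuous.comp continuous_subtype_val).continuousOn
      · exact fun v hv => hv
    · apply ContinuousOn.inv₀
      · exact (continuous_norm.comp continuous_subtype_val).continuousOn
      · exact fun v _ => norm_ne_zero_iff.mpr v.2
  have hOopen : IsOpen (pj '' (Wg ∩ rho g ⁻¹' N')) :=
    isOpenMap_pj _ (hrho.isOpen_inter_preimage hWgopen hN'o)
  have hxO : x ∈ pj '' (Wg ∩ rho g ⁻¹' N') := by
    refine ⟨⟨x.rep, x.rep_nonzero⟩, ⟨hx, ?_⟩, x.mk_rep⟩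
    show rho g ⟨x.rep, x.rep_nonzero⟩ ∈ N'
    rw [← tau_eq]
    exact hmemN'
  refine Filter.mem_of_superset (hOopen.mem_nhds hxO) ?_
  rintro y ⟨v, ⟨-, hv2⟩, rfl⟩
  exact hsub (by rw [tau_pj]; exact hv2)

lemma exists_ann (n m : ℕ) (hm : m ≤ n) (w : Fin m → (Fin (n+1) → ℝ)) :
    ∃ f : (Fin (n+1) → ℝ) →L[ℝ] ℝ, f ≠ 0 ∧ ∀ k, f (w k) = 0 := by
  classical
  have hfr : Module.finrank ℝ (Submodule.span ℝ (Set.range w)) ≤ m := by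
    refine le_trans (finrank_span_le_card (R := ℝ) (Set.range w)) ?_
    rw [Set.toFinset_range]
    exact le_trans (Finset.card_image_le) (by simp)
  have hlt : Submodule.span ℝ (Set.range w) < ⊤ := by
    apply Submodule.lt_top_of_finrank_lt_finrank
    have : Module.finrank ℝ (Fin (n+1) → ℝ) = n + 1 := by
      simp [Module.finrank_pi]
    omega
  obtain ⟨φ, hφ0, hφ⟩ := Submodule.exists_dual_map_eq_bot_of_lt_top hlt inferInstance
  refine ⟨LinearMap.toContinuousLinearMap φ, ?_, ?_⟩
  · intro h
    apply hφ0
    refine LinearMap.ext fun v => ?_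
    have := congrArg (fun f => f v) h
    simpa using this
  · intro k
    have hmem : φ (w k) ∈ (Submodule.span ℝ (Set.range w)).map φ :=
      Submodule.mem_map_of_mem (Submodule.subset_span (Set.mem_range_self k))
    rw [hφ] at hmem
    simpa using hmem

lemma eval_tau_nonpos_iff (f g : (Fin (n+1) → ℝ) →L[ℝ] ℝ) (x : Proj n) (hgx : g x.rep ≠ 0) :
    f (tau g x) ≤ 0 ↔ f x.rep * g x.rep ≤ 0 := by
  have := eval_tau_nonneg_iff (-f) g x hgx
  simp only [ContinuousLinearMap.neg_apply, neg_mul] at this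
  constructor
  · intro h
    have := this.mp (by linarith)
    linarith
  · intro h
    have := this.mpr (by linarith)
    linarith


set_option maxHeartbeats 1000000 in
/-- Main theorem: if `A₁, …, Aₙ` are non-empty closed connected subsets of `ℙⁿ(ℝ)` and there is
a point `p` through which no hyperplane meets all of them, then there is a hyperplane supporting
every `Aᵢ` at some point `xᵢ ∈ Aᵢ`. -/
theorem exists_n_supporting_hyperplane (n : ℕ) (A : Fin n → Set (Proj n))
    (hcl : ∀ i, IsClosed (A i)) (hconn : ∀ i, IsConnected (A i)) (p : Proj n)
    (hp : ¬ ∃ f : (Fin (n + 1) → ℝ) →L[ℝ] ℝ, f ≠ 0 ∧ f p.rep = 0 ∧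
      ∀ i, ∃ x ∈ A i, f x.rep = 0) :
    ∃ f : (Fin (n + 1) → ℝ) →L[ℝ] ℝ, f ≠ 0 ∧
      ∃ x : Fin n → Proj n, ∀ i, SupportsAt f (A i) (x i) := by
  classical
  have hAne : ∀ i, (A i).Nonempty := fun i => (hconn i).nonempty
  have _ : CompactSpace (Proj n) := compactSpace_proj
  have hAcomp : ∀ i, IsCompact (A i) := fun i => (hcl i).isCompact
  -- Step 1: every `A i` lies in an affine chart
  have hchart : ∀ i, ∃ g : (Fin (n+1) → ℝ) →L[ℝ] ℝ, ∀ x ∈ A i, g x.rep ≠ 0 := by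
    by_contra hc
    push_neg at hc
    obtain ⟨i₀, hi₀⟩ := hc
    choose y hy using hAne
    obtain ⟨f, hf0, hfv⟩ := exists_ann n n le_rfl
      (fun j => if j = i₀ then p.rep else (y j).rep)
    refine hp ⟨f, hf0, ?_, ?_⟩
    · have := hfv i₀; simpa using this
    · intro i
      by_cases hii : i = i₀
      · subst hii
        obtain ⟨x, hxA, hx⟩ := hi₀ f
        exact ⟨x, hxA, hx⟩
      · refine ⟨y i, hy i, ?_⟩
        have := hfv i
        simpa [hii] using this
  choose g hg using hchart
  -- Step 2: the lifted compact connected sets `B i` on the unit sphere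
  set B : Fin n → Set (Fin (n+1) → ℝ) := fun i => tau (g i) '' (A i) with hB
  have hτcont : ∀ i, ContinuousOn (tau (g i)) (A i) :=
    fun i => (continuousOn_tau (g i)).mono (fun x hx => hg i x hx)
  have hBcomp : ∀ i, IsCompact (B i) := fun i => (hAcomp i).image_of_continuousOn (hτcont i)
  have hBconn : ∀ i, IsConnected (B i) := fun i => (hconn i).image _ (hτcont i)
  have hBne : ∀ i, (B i).Nonempty := fun i => (hAne i).image _
  have hBnorm : ∀ i, ∀ v ∈ B i, ‖v‖ = 1 := by
    rintro i v ⟨x, hx, rfl⟩; exact norm_tau _ x (hg i x hx)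
  have hBmk : ∀ i, ∀ v ∈ B i, ∃ hv : v ≠ 0, Projectivization.mk ℝ v hv ∈ A i := by
    rintro i v ⟨x, hx, rfl⟩
    refine ⟨tau_ne_zero _ x (hg i x hx), ?_⟩
    rw [show Projectivization.mk ℝ _ (tau_ne_zero _ x (hg i x hx))
      = pj ⟨tau (g i) x, tau_ne_zero _ x (hg i x hx)⟩ from rfl, pj_tau _ x (hg i x hx)]
    exact hx
  -- meeting transfer
  have hmeet_of_B : ∀ (i : Fin n) (f : (Fin (n+1) → ℝ) →L[ℝ] ℝ),
      (∃ v ∈ B i, f v = 0) → ∃ x ∈ A i, f x.rep = 0 := by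
    rintro i f ⟨v, ⟨x, hx, rfl⟩, hfv⟩
    exact ⟨x, hx, (eval_tau_eq_zero_iff f (g i) x (hg i x hx)).mp hfv⟩
  -- the compact incidence set S
  set S : Set ((Fin (n+1) → ℝ) →L[ℝ] ℝ) :=
    {f | f p.rep = 1 ∧ ∀ i, ∃ v ∈ B i, f v = 0} with hS
  have hevalc : ∀ v : Fin (n+1) → ℝ,
      Continuous fun f : (Fin (n+1) → ℝ) →L[ℝ] ℝ => f v :=
    fun v => (ContinuousLinearMap.apply ℝ ℝ v).continuous
  have hSiclosed : ∀ (K : Set (Fin (n+1) → ℝ)), IsCompact K → (∀ v ∈ K, ‖v‖ = 1) →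
      IsClosed {f : (Fin (n+1) → ℝ) →L[ℝ] ℝ | ∃ v ∈ K, f v = 0} := by
    intro K hK hKn
    rw [← isOpen_compl_iff, Metric.isOpen_iff]
    intro f hf
    simp only [Set.mem_compl_iff, Set.mem_setOf_eq, not_exists] at hf
    push_neg at hf
    rcases K.eq_empty_or_nonempty with rfl | hKne
    · refine ⟨1, one_pos, ?_⟩
      intro f' _
      simp
    obtain ⟨v₀, hv₀K, hv₀⟩ := hK.exists_isMinOn hKne
      ((continuous_abs.comp f.continuous).continuousOn)
    refine ⟨|f v₀|, abs_pos.mpr (hf v₀ hv₀K), ?_⟩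
    intro f' hball hf'
    simp only [Set.mem_setOf_eq] at hf'
    obtain ⟨v, hv, hf'v⟩ := hf'
    have h1 : |f v - f' v| ≤ ‖f - f'‖ := by
      have := (f - f').le_opNorm v
      simpa [hKn v hv] using this
    have h2 : ‖f - f'‖ < |f v₀| := by
      rw [Metric.mem_ball, dist_eq_norm] at hball
      rwa [norm_sub_rev]
    have h4 : |f v₀| ≤ |f v| := isMinOn_iff.mp hv₀ v hv
    rw [hf'v, sub_zero] at h1
    linarith
  have hSclosed : IsClosed S := by
    have h1 : IsClosed {f : (Fin (n+1) → ℝ) →L[ℝ] ℝ | f p.rep = 1} :=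
      isClosed_eq (hevalc p.rep) continuous_const
    have h2 : IsClosed (⋂ i, {f : (Fin (n+1) → ℝ) →L[ℝ] ℝ | ∃ v ∈ B i, f v = 0}) :=
      isClosed_iInter fun i => hSiclosed (B i) (hBcomp i) (hBnorm i)
    have hSeq : S = {f : (Fin (n+1) → ℝ) →L[ℝ] ℝ | f p.rep = 1}
        ∩ ⋂ i, {f : (Fin (n+1) → ℝ) →L[ℝ] ℝ | ∃ v ∈ B i, f v = 0} := by
      ext f
      simp only [hS, Set.mem_setOf_eq, Set.mem_inter_iff, Set.mem_iInter]
    rw [hSeq]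
    exact h1.inter h2
  -- S is bounded
  have hSbdd : ∃ R, ∀ f ∈ S, ‖f‖ ≤ R := by
    by_contra hub
    push_neg at hub
    have hseq : ∀ k : ℕ, ∃ f, f ∈ S ∧ (k : ℝ) + 1 < ‖f‖ := by
      intro k
      obtain ⟨f, hfS, hfn⟩ := hub ((k : ℝ) + 1)
      exact ⟨f, hfS, hfn⟩
    choose F hFS hFn using hseq
    have hFpos : ∀ k, (0:ℝ) < ‖F k‖ := by
      intro k
      have := hFn k
      have : (0:ℝ) ≤ (k:ℝ) := Nat.cast_nonneg k
      linarith [hFn k]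
    set H : ℕ → (Fin (n+1) → ℝ) →L[ℝ] ℝ := fun k => ‖F k‖⁻¹ • F k with hH
    have hHs : ∀ k, H k ∈ Metric.sphere (0 : (Fin (n+1) → ℝ) →L[ℝ] ℝ) 1 := by
      intro k
      have : ‖H k‖ = 1 := by
        show ‖‖F k‖⁻¹ • F k‖ = 1
        rw [norm_smul (α := ℝ) (β := (Fin (n+1) → ℝ) →L[ℝ] ℝ) (‖F k‖⁻¹) (F k),
          norm_inv, norm_norm]
        exact inv_mul_cancel₀ (hFpos k).ne'
      simpa [mem_sphere_iff_norm] using this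
    obtain ⟨h, hhsph, φ, hφmono, hφtend⟩ :=
      (isCompact_sphere (0 : (Fin (n+1) → ℝ) →L[ℝ] ℝ) 1).tendsto_subseq hHs
    have hh1 : ‖h‖ = 1 := by simpa using hhsph
    have hev : Filter.Tendsto (fun k => (H (φ k)) p.rep) Filter.atTop (𝓝 (h p.rep)) :=
      ((hevalc p.rep).tendsto h).comp hφtend
    have heq : (fun k => (H (φ k)) p.rep) = fun k => ‖F (φ k)‖⁻¹ := by
      funext k
      simp only [hH, ContinuousLinearMap.smul_apply, smul_eq_mul, (hFS (φ k)).1, mul_one]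
    have hev0 : Filter.Tendsto (fun k => (H (φ k)) p.rep) Filter.atTop (𝓝 0) := by
      rw [heq]
      refine squeeze_zero (g := fun k : ℕ => 1 / ((k:ℝ) + 1)) (fun k => ?_) (fun k => ?_)
        tendsto_one_div_add_atTop_nhds_zero_nat
      · exact inv_nonneg.mpr (norm_nonneg _)
      · show ‖F (φ k)‖⁻¹ ≤ 1 / ((k:ℝ) + 1)
        rw [one_div]
        apply inv_anti₀ (by positivity)
        have h1 : (k : ℝ) ≤ (φ k : ℝ) := by exact_mod_cast hφmono.le_apply
        have := hFn (φ k)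
        linarith
    have hp0 : h p.rep = 0 := tendsto_nhds_unique hev hev0
    have hmeets : ∀ i, ∃ v ∈ B i, h v = 0 := by
      intro i
      refine (hSiclosed (B i) (hBcomp i) (hBnorm i)).mem_of_tendsto hφtend
        (Filter.Eventually.of_forall fun k => ?_)
      obtain ⟨v, hv, hfv⟩ := (hFS (φ k)).2 i
      exact ⟨v, hv, by simp [hH, hfv]⟩
    refine hp ⟨h, ?_, hp0, fun i => hmeet_of_B i h (hmeets i)⟩
    intro h0
    rw [h0] at hh1
    simp at hh1
  -- S is nonempty
  choose b hbB using hBne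
  obtain ⟨f₁, hf₁0, hf₁v⟩ := exists_ann n n le_rfl b
  have hf₁p : f₁ p.rep ≠ 0 := by
    intro h0
    exact hp ⟨f₁, hf₁0, h0, fun i => hmeet_of_B i f₁ ⟨b i, hbB i, hf₁v i⟩⟩
  have hSne : S.Nonempty := by
    refine ⟨(f₁ p.rep)⁻¹ • f₁, ?_, fun i => ⟨b i, hbB i, by simp [hf₁v i]⟩⟩
    simp [inv_mul_cancel₀ hf₁p]
  -- S is compact, take an extreme point
  obtain ⟨R, hR⟩ := hSbdd
  have hScomp : IsCompact S := by
    apply Metric.isCompact_of_isClosed_isBounded hSclosed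
    exact isBounded_iff_forall_norm_le.mpr ⟨R, hR⟩
  obtain ⟨f₀, hf₀⟩ := hScomp.extremePoints_nonempty hSne
  rw [mem_extremePoints] at hf₀
  obtain ⟨hf₀S, hf₀ext⟩ := hf₀
  obtain ⟨hf₀p, hf₀m⟩ : f₀ p.rep = 1 ∧ ∀ i, ∃ v ∈ B i, f₀ v = 0 := hf₀S
  -- Step 3: f₀ supports every A i
  have hsupp : ∀ i, ∃ x, SupportsAt f₀ (A i) x := by
    by_contra hns
    push_neg at hns
    obtain ⟨i₀, hi₀⟩ := hns
    -- if f₀ has a sign on B i₀, it supports A i₀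
    have hsign : ∀ v₀ ∈ B i₀, f₀ v₀ = 0 →
        ((∀ w ∈ B i₀, 0 ≤ f₀ w) ∨ (∀ w ∈ B i₀, f₀ w ≤ 0)) → False := by
      intro v₀ hv₀B hv₀0 hsgn
      obtain ⟨hv₀ne, hv₀A⟩ := hBmk i₀ v₀ hv₀B
      set x : Proj n := Projectivization.mk ℝ v₀ hv₀ne with hx
      obtain ⟨a, ha⟩ := Projectivization.exists_smul_eq_mk_rep ℝ v₀ hv₀ne
      apply hi₀ x
      refine ⟨hv₀A, ?_, g i₀, hg i₀ x hv₀A, fun y hy => hg i₀ y hy, ?_⟩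
      · rw [hx, ← ha]
        simp [hv₀0]
      · rcases hsgn with hsgn | hsgn
        · left
          intro y hy
          have h1 : 0 ≤ f₀ (tau (g i₀) y) := hsgn _ ⟨y, hy, rfl⟩
          exact (eval_tau_nonneg_iff f₀ (g i₀) y (hg i₀ y hy)).mp h1
        · right
          intro y hy
          have h1 : f₀ (tau (g i₀) y) ≤ 0 := hsgn _ ⟨y, hy, rfl⟩
          exact (eval_tau_nonpos_iff f₀ (g i₀) y (hg i₀ y hy)).mp h1
    obtain ⟨v₀, hv₀B, hv₀0⟩ := hf₀m i₀
    have hstrictm : ∃ w ∈ B i₀, f₀ w < 0 := by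
      by_contra hcon
      push_neg at hcon
      exact hsign v₀ hv₀B hv₀0 (Or.inl hcon)
    have hstrictp : ∃ w ∈ B i₀, 0 < f₀ w := by
      by_contra hcon
      push_neg at hcon
      exact hsign v₀ hv₀B hv₀0 (Or.inr hcon)
    obtain ⟨wm, hwmB, hwm⟩ := hstrictm
    obtain ⟨wp, hwpB, hwp⟩ := hstrictp
    choose v hvB hv0 using hf₀m
    obtain ⟨u, hu0, huv⟩ := exists_ann n n le_rfl (fun j => if j = i₀ then p.rep else v j)
    have hup : u p.rep = 0 := by simpa using huv i₀
    have huvj : ∀ j, j ≠ i₀ → u (v j) = 0 := by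
      intro j hj
      have := huv j
      simpa [hj] using this
    have hminpos : 0 < min (-f₀ wm) (f₀ wp) := lt_min (by linarith) hwp
    set ε : ℝ := min (-f₀ wm) (f₀ wp) / (2 * (‖u‖ + 1)) with hε
    have hεpos : 0 < ε := by
      apply div_pos hminpos
      positivity
    have hbound : ∀ w : Fin (n+1) → ℝ, ‖w‖ = 1 → |ε * u w| < min (-f₀ wm) (f₀ wp) := by
      intro w hw
      have h1 : |u w| ≤ ‖u‖ := by
        have := u.le_opNorm w
        simpa [hw, Real.norm_eq_abs] using this
      rw [abs_mul, abs_of_pos hεpos]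
      calc ε * |u w| ≤ ε * ‖u‖ := mul_le_mul_of_nonneg_left h1 hεpos.le
        _ < min (-f₀ wm) (f₀ wp) := by
          rw [hε, div_mul_eq_mul_div, div_lt_iff₀ (by positivity)]
          nlinarith [norm_nonneg u, hminpos]
    have hmem : ∀ s : ℝ, |s| = 1 → f₀ + (s * ε) • u ∈ S := by
      intro s hs
      have habs : ∀ w : Fin (n+1) → ℝ, ‖w‖ = 1 → |(s * ε) * u w| < min (-f₀ wm) (f₀ wp) := by
        intro w hw
        have := hbound w hw
        calc |(s * ε) * u w| = |s| * |ε * u w| := by rw [← abs_mul]; ring_nf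
          _ = |ε * u w| := by rw [hs, one_mul]
          _ < _ := this
      rw [hS]
      refine ⟨?_, ?_⟩
      · simp [hf₀p, hup]
      · intro i
        by_cases hii : i = i₀
        · subst hii
          have hcm : f₀ wm + (s * ε) * u wm ≤ 0 := by
            have h1 := habs wm (hBnorm i wm hwmB)
            have h2 : min (-f₀ wm) (f₀ wp) ≤ -f₀ wm := min_le_left _ _
            have h3 := abs_lt.mp h1
            linarith [h3.2]
          have hcp : 0 ≤ f₀ wp + (s * ε) * u wp := by
            have h1 := habs wp (hBnorm i wp hwpB)
            have h2 : min (-f₀ wm) (f₀ wp) ≤ f₀ wp := min_le_right _ _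
            have h3 := abs_lt.mp h1
            linarith [h3.1]
          have hIcc : (0:ℝ) ∈ Set.Icc ((f₀ + (s * ε) • u) wm) ((f₀ + (s * ε) • u) wp) := by
            constructor
            · simpa using hcm
            · simpa using hcp
          have := (hBconn i).isPreconnected.intermediate_value hwmB hwpB
            ((f₀ + (s * ε) • u).continuous.continuousOn)
          obtain ⟨vz, hvzB, hvz⟩ := this hIcc
          exact ⟨vz, hvzB, hvz⟩
        · refine ⟨v i, hvB i, ?_⟩
          simp [hv0 i, huvj i hii]
    have hfp := hmem 1 (by simp)
    have hfm := hmem (-1) (by simp)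
    have hseg : f₀ ∈ openSegment ℝ (f₀ + (1 * ε) • u) (f₀ + ((-1) * ε) • u) := by
      refine ⟨1/2, 1/2, by norm_num, by norm_num, by norm_num, ?_⟩
      module
    have hcontr := hf₀ext _ hfp _ hfm hseg
    have h1 : (1 * ε) • u = 0 := by
      have := hcontr.1
      have h2 : f₀ + (1 * ε) • u - f₀ = 0 := by rw [this]; abel
      simpa using h2
    rw [one_mul] at h1
    rcases smul_eq_zero.mp h1 with h | h
    · exact hεpos.ne' h
    · exact hu0 h
  choose x hx using hsupp
  refine ⟨f₀, ?_, x, hx⟩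
  intro h0
  rw [h0] at hf₀p
  simp at hf₀p
end

section
/- If each of A₁, …, A_n ⊆ ℙ^n(ℝ) contains a non-empty open subset, then the set 𝓗* of duals of hyperplanes meeting all the Aᵢ contains a non-empty open subset of the dual projective space ℙ((ℝ^{n+1})*). -/
section Aux

variable {W : Type*} [AddCommGroup W] [Module ℝ W] [TopologicalSpace W] [T1Space W]

omit [T1Space W] in
theorem isQuotientMap_projMk' :
    Topology.IsQuotientMap (Projectivization.mk' ℝ : {v : W // v ≠ 0} → Projectivization ℝ W) :=
  isQuotientMap_quotient_mk'

theorem projOpen {U : Set (Projectivization ℝ W)} (hU : IsOpen U) :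
    IsOpen {v : W | ∃ hv : v ≠ 0, Projectivization.mk ℝ v hv ∈ U} := by
  have h1 : IsOpen (Projectivization.mk' ℝ ⁻¹' U) :=
    hU.preimage isQuotientMap_projMk'.continuous
  obtain ⟨t, ht, hts⟩ := isOpen_induced_iff.1 h1
  have : {v : W | ∃ hv : v ≠ 0, Projectivization.mk ℝ v hv ∈ U} = t ∩ {v : W | v ≠ 0} := by
    ext v
    constructor
    · rintro ⟨hv, hm⟩
      have : (⟨v, hv⟩ : {v : W // v ≠ 0}) ∈ Subtype.val ⁻¹' t := by
        rw [hts]; exact hm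
      exact ⟨this, hv⟩
    · rintro ⟨htv, hv⟩
      refine ⟨hv, ?_⟩
      have : (⟨v, hv⟩ : {v : W // v ≠ 0}) ∈ Subtype.val ⁻¹' t := htv
      rw [hts] at this; exact this
  rw [this]
  exact ht.inter (Set.compl_singleton_eq (0 : W) ▸ isClosed_singleton.isOpen_compl)

end Aux

/-- If each `Aᵢ ⊆ ℙⁿ(ℝ)` contains a non-empty open set, then the set `𝓗*` of duals of
hyperplanes meeting all the `Aᵢ` contains a non-empty open subset of the dual projective
space. -/
theorem dual_incidence_set_has_interior (n : ℕ) (A : Fin n → Set (Proj n))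
    (hop : ∀ i, ∃ U : Set (Proj n), IsOpen U ∧ U.Nonempty ∧ U ⊆ A i) :
    ∃ V : Set (DProj n), IsOpen V ∧ V.Nonempty ∧
      V ⊆ {L : DProj n | ∀ i, ∃ x ∈ A i, L.rep x.rep = 0} := by
  classical
  choose U hUo hUne hUA using hop
  set P : Fin n → Set (Fin (n + 1) → ℝ) :=
    fun i => {v | ∃ hv : v ≠ 0, Projectivization.mk ℝ v hv ∈ U i} with hP
  have hPo : ∀ i, IsOpen (P i) := fun i => projOpen (hUo i)
  -- evaluation maps are continuous
  have hev : ∀ v : Fin (n + 1) → ℝ, Continuous fun f : (Fin (n + 1) → ℝ) →L[ℝ] ℝ => f v := fun v =>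
    (ContinuousLinearMap.apply ℝ ℝ v).continuous
  set S : Set ((Fin (n + 1) → ℝ) →L[ℝ] ℝ) := {f | f ≠ 0 ∧ ∀ i, ∃ v ∈ P i, f v = 0} with hS
  -- the set of nonzero forms is open
  have hne_open : IsOpen {f : (Fin (n + 1) → ℝ) →L[ℝ] ℝ | f ≠ 0} := by
    have : {f : (Fin (n + 1) → ℝ) →L[ℝ] ℝ | f ≠ 0} = ⋃ u, (fun f : (Fin (n + 1) → ℝ) →L[ℝ] ℝ => f u) ⁻¹' {(0 : ℝ)}ᶜ := by
      ext f
      simp only [Set.mem_setOf_eq, Set.mem_iUnion, Set.mem_preimage, Set.mem_compl_iff,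
        Set.mem_singleton_iff]
      rw [DFunLike.ne_iff]
      simp [ContinuousLinearMap.zero_apply]
    rw [this]
    exact isOpen_iUnion fun u => isOpen_compl_singleton.preimage (hev u)
  have hSo : IsOpen S := by
    rw [isOpen_iff_mem_nhds]
    rintro f₀ ⟨hf0, hf⟩
    have hmain : ∀ i, {f : (Fin (n + 1) → ℝ) →L[ℝ] ℝ | ∃ v ∈ P i, f v = 0} ∈ nhds f₀ := by
      intro i
      obtain ⟨v, hvP, hfv⟩ := hf i
      obtain ⟨w, hw⟩ : ∃ w, f₀ w ≠ 0 := by rwa [DFunLike.ne_iff] at hf0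
      set φ : ((Fin (n + 1) → ℝ) →L[ℝ] ℝ) → (Fin (n + 1) → ℝ) := fun f => v - (f v / f w) • w with hφdef
      have hφc : ContinuousAt φ f₀ :=
        (continuousAt_const.sub
          (((hev v).continuousAt.div (hev w).continuousAt hw).smul continuousAt_const))
      have hφ0 : φ f₀ = v := by simp [hφdef, hfv]
      have h1 : φ ⁻¹' (P i) ∈ nhds f₀ := hφc.preimage_mem_nhds (by rw [hφ0]; exact (hPo i).mem_nhds hvP)
      have h2 : (fun f : (Fin (n + 1) → ℝ) →L[ℝ] ℝ => f w) ⁻¹' {(0:ℝ)}ᶜ ∈ nhds f₀ :=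
        (hev w).continuousAt.preimage_mem_nhds (by simp [isOpen_compl_singleton.mem_nhds, hw])
      refine Filter.mem_of_superset (Filter.inter_mem h1 h2) ?_
      rintro f ⟨hf1, hf2⟩
      simp only [Set.mem_preimage, Set.mem_compl_iff, Set.mem_singleton_iff] at hf2
      refine ⟨φ f, hf1, ?_⟩
      simp only [hφdef, map_sub, map_smul, smul_eq_mul]
      field_simp
      ring
    refine Filter.inter_mem (hne_open.mem_nhds hf0) ?_
    refine Filter.mem_of_superset ((Filter.iInter_mem).2 hmain) fun f hfm i => ?_
    exact Set.mem_iInter.1 hfm i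
  -- S is invariant under scaling by units
  have hSinv : ∀ (a : ℝˣ) (f : (Fin (n + 1) → ℝ) →L[ℝ] ℝ), f ∈ S → (a : ℝ) • f ∈ S := by
    rintro a f ⟨hf0, hf⟩
    refine ⟨smul_ne_zero (a.ne_zero) hf0, fun i => ?_⟩
    obtain ⟨v, hvP, hfv⟩ := hf i
    exact ⟨v, hvP, by rw [ContinuousLinearMap.smul_apply, hfv, smul_zero]⟩
  have hSiff : ∀ (a : ℝˣ) (f : (Fin (n + 1) → ℝ) →L[ℝ] ℝ), (a : ℝ) • f ∈ S ↔ f ∈ S := by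
    intro a f
    constructor
    · intro h
      have := hSinv a⁻¹ _ h
      rwa [smul_smul, Units.inv_mul, one_smul] at this
    · exact hSinv a f
  -- S is nonempty: build a form vanishing at chosen points
  obtain ⟨F₀, hF₀⟩ : S.Nonempty := by
    set x : Fin n → Proj n := fun i => (hUne i).some with hx
    set v : Fin n → (Fin (n + 1) → ℝ) := fun i => (x i).rep with hv
    have hspan : Submodule.span ℝ (Set.range v) < ⊤ := by
      apply span_lt_top_of_card_lt_finrank
      have h1 : (Set.range v).toFinset.card ≤ n := by
        rw [Set.toFinset_range]
        exact Finset.card_image_le.trans (by simp)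
      have h2 : Module.finrank ℝ (Fin (n + 1) → ℝ) = n + 1 := Module.finrank_fin_fun ℝ
      omega
    obtain ⟨f, hfne, hfmap⟩ :=
      Submodule.exists_dual_map_eq_bot_of_lt_top hspan inferInstance
    set F : (Fin (n + 1) → ℝ) →L[ℝ] ℝ := LinearMap.toContinuousLinearMap f with hF
    have hFne : F ≠ 0 := by
      simpa [hF] using (LinearMap.toContinuousLinearMap (𝕜 := ℝ)
        (E := Fin (n + 1) → ℝ)).map_ne_zero_iff.2 hfne
    refine ⟨F, hFne, fun i => ?_⟩
    refine ⟨v i, ?_, ?_⟩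
    · refine ⟨(x i).rep_nonzero, ?_⟩
      rw [Projectivization.mk_rep]
      exact (hUne i).some_mem
    · have hmem : v i ∈ Submodule.span ℝ (Set.range v) :=
        Submodule.subset_span (Set.mem_range_self i)
      have : f (v i) ∈ (Submodule.span ℝ (Set.range v)).map f :=
        Submodule.mem_map_of_mem hmem
      rw [hfmap, Submodule.mem_bot] at this
      simpa [hF] using this
  -- define V
  refine ⟨{L : DProj n | L.rep ∈ S}, ?_, ?_, ?_⟩
  · rw [← isQuotientMap_projMk'.isOpen_preimage]
    have : Projectivization.mk' ℝ ⁻¹' {L : DProj n | L.rep ∈ S} = Subtype.val ⁻¹' S := by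
      ext ⟨f, hf⟩
      simp only [Set.mem_preimage, Set.mem_setOf_eq, Projectivization.mk'_eq_mk]
      obtain ⟨a, ha⟩ := Projectivization.exists_smul_eq_mk_rep ℝ f hf
      rw [← ha, Units.smul_def, hSiff]
    rw [this]
    exact hSo.preimage continuous_subtype_val
  · refine ⟨Projectivization.mk ℝ F₀ hF₀.1, ?_⟩
    obtain ⟨a, ha⟩ := Projectivization.exists_smul_eq_mk_rep ℝ F₀ hF₀.1
    show (Projectivization.mk ℝ F₀ hF₀.1).rep ∈ S
    rw [← ha, Units.smul_def, hSiff]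
    exact hF₀
  · rintro L hL i
    obtain ⟨v, ⟨hvne, hvU⟩, hfv⟩ := hL.2 i
    refine ⟨Projectivization.mk ℝ v hvne, hUA i hvU, ?_⟩
    obtain ⟨a, ha⟩ := Projectivization.exists_smul_eq_mk_rep ℝ v hvne
    rw [← ha, Units.smul_def, map_smul, hfv, smul_zero]
end

section
/- For a non-empty open subset U of ℙ^n(ℝ), the set of duals of hyperplanes meeting U is open in the dual projective space ℙ((ℝ^{n+1})*). -/
/-- Any representative of a projective point vanishes on a form iff the chosen `rep` does. -/
lemma rep_zero_iff {n : ℕ} (f : (Fin (n + 1) → ℝ) →L[ℝ] ℝ) (v : Fin (n + 1) → ℝ) (hv : v ≠ 0) :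
    f (Projectivization.mk ℝ v hv).rep = 0 ↔ f v = 0 := by
  set x := Projectivization.mk ℝ v hv with hx
  have h : Projectivization.mk ℝ x.rep x.rep_nonzero = Projectivization.mk ℝ v hv :=
    by rw [Projectivization.mk_rep]
  rw [Projectivization.mk_eq_mk_iff] at h
  obtain ⟨a, ha⟩ := h
  rw [← ha, Units.smul_def, map_smul, smul_eq_mul]
  simp [a.ne_zero]

lemma aux_isOpen {n : ℕ} (U : Set (Proj n)) (hU : IsOpen U) :
    IsOpen {f : (Fin (n + 1) → ℝ) →L[ℝ] ℝ | ∃ x ∈ U, f ≠ 0 ∧ f x.rep = 0} := by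
  rw [isOpen_iff_mem_nhds]
  rintro f₀ ⟨x₀, hx₀U, hf₀, hfx₀⟩
  -- pick w with f₀ w = 1
  obtain ⟨w₀, hw₀⟩ : ∃ w, f₀ w ≠ 0 := by
    by_contra h; push_neg at h
    exact hf₀ (ContinuousLinearMap.ext fun v => by simp [h v])
  set w : Fin (n + 1) → ℝ := (f₀ w₀)⁻¹ • w₀ with hw
  have hfw : f₀ w = 1 := by simp [hw, inv_mul_cancel₀ hw₀]
  set v₀ := x₀.rep with hv₀def
  have hv₀ : v₀ ≠ 0 := x₀.rep_nonzero
  -- the open set of nonzero vectors whose projective class lies in U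
  set O : Set (Fin (n + 1) → ℝ) := Subtype.val '' (Projectivization.mk' ℝ ⁻¹' U) with hO
  have hOopen : IsOpen O := by
    have h1 : IsOpen {v : Fin (n + 1) → ℝ | v ≠ 0} := isOpen_compl_singleton
    exact h1.isOpenMap_subtype_val _ (hU.preimage continuous_quotient_mk')
  have hmemO : ∀ v : Fin (n + 1) → ℝ, v ∈ O → ∃ h : v ≠ 0, Projectivization.mk ℝ v h ∈ U := by
    rintro v ⟨⟨v', hv'⟩, hvU, rfl⟩
    exact ⟨hv', by rwa [← Projectivization.mk'_eq_mk]⟩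
  have hv₀O : v₀ ∈ O := by
    refine ⟨⟨v₀, hv₀⟩, ?_, rfl⟩
    show Projectivization.mk' ℝ ⟨v₀, hv₀⟩ ∈ U
    rw [Projectivization.mk'_eq_mk, Projectivization.mk_rep]
    exact hx₀U
  -- the line s ↦ v₀ + s • w
  set c : ℝ → (Fin (n + 1) → ℝ) := fun s => v₀ + s • w with hc
  have hcc : Continuous c := continuous_const.add (continuous_id.smul continuous_const)
  have hpre : IsOpen (c ⁻¹' O) := hOopen.preimage hcc
  have h0 : (0 : ℝ) ∈ c ⁻¹' O := by simpa [hc] using hv₀O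
  obtain ⟨ε, hε, hball⟩ := Metric.isOpen_iff.1 hpre 0 h0
  set t : ℝ := ε / 2 with ht
  have htpos : 0 < t := by positivity
  have hseg : ∀ s : ℝ, s ∈ Set.Icc (-t) t → c s ∈ O := by
    intro s hs
    apply hball
    simp only [Metric.mem_ball, Real.dist_eq, sub_zero]
    rw [abs_lt]
    constructor <;> [nlinarith [hs.1]; nlinarith [hs.2]]
  have hfct : f₀ (c t) = t := by simp [hc, hfx₀, hfw]
  have hfcmt : f₀ (c (-t)) = -t := by simp [hc, hfx₀, hfw]
  -- the neighborhood of f₀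
  have hWopen : IsOpen {f : (Fin (n + 1) → ℝ) →L[ℝ] ℝ | 0 < f (c t) ∧ f (c (-t)) < 0} := by
    apply IsOpen.inter
    · exact isOpen_lt continuous_const (Continuous.clm_apply continuous_id' continuous_const)
    · exact isOpen_lt (Continuous.clm_apply continuous_id' continuous_const) continuous_const
  have hf₀W : f₀ ∈ {f : (Fin (n + 1) → ℝ) →L[ℝ] ℝ | 0 < f (c t) ∧ f (c (-t)) < 0} := by
    constructor <;> simp [hfct, hfcmt, htpos]
  refine Filter.mem_of_superset (hWopen.mem_nhds hf₀W) ?_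
  rintro f ⟨hfp, hfn⟩
  have hfne : f ≠ 0 := by
    intro h; rw [h] at hfp; simp at hfp
  -- IVT
  have hcont : ContinuousOn (fun s => f (c s)) (Set.Icc (-t) t) :=
    (f.continuous.comp hcc).continuousOn
  have h0mem : (0 : ℝ) ∈ Set.Icc (f (c (-t))) (f (c t)) := ⟨hfn.le, hfp.le⟩
  obtain ⟨s, hsIcc, hs0⟩ :=
    intermediate_value_Icc (by linarith : -t ≤ t) hcont h0mem
  obtain ⟨hcs, hcsU⟩ := hmemO (c s) (hseg s hsIcc)
  refine ⟨Projectivization.mk ℝ (c s) hcs, hcsU, hfne, ?_⟩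
  rw [rep_zero_iff]
  exact hs0

/-- Dual version: a representative of a projective class of forms vanishes at `v` iff the
original form does. -/
lemma rep_zero_iff' {n : ℕ} (f : (Fin (n + 1) → ℝ) →L[ℝ] ℝ) (hf : f ≠ 0)
    (v : Fin (n + 1) → ℝ) :
    (Projectivization.mk ℝ f hf).rep v = 0 ↔ f v = 0 := by
  set x := Projectivization.mk ℝ f hf with hx
  have h : Projectivization.mk ℝ x.rep x.rep_nonzero = Projectivization.mk ℝ f hf :=
    by rw [Projectivization.mk_rep]
  rw [Projectivization.mk_eq_mk_iff] at h
  obtain ⟨a, ha⟩ := h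
  rw [← ha, Units.smul_def, ContinuousLinearMap.smul_apply, smul_eq_mul]
  simp [a.ne_zero]

/-- For a non-empty open `U ⊆ ℙⁿ(ℝ)`, the set of duals of hyperplanes meeting `U` is open in
the dual projective space. -/
theorem isOpen_dual_hyperplanes_meeting_open (n : ℕ) (U : Set (Proj n)) (hU : IsOpen U)
    (hUne : U.Nonempty) :
    IsOpen {L : DProj n | ∃ x ∈ U, L.rep x.rep = 0} := by
  have hq : Topology.IsQuotientMap
      (Projectivization.mk' ℝ : {f : (Fin (n + 1) → ℝ) →L[ℝ] ℝ // f ≠ 0} → DProj n) := by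
    letI : Setoid {f : (Fin (n + 1) → ℝ) →L[ℝ] ℝ // f ≠ 0} :=
      projectivizationSetoid ℝ ((Fin (n + 1) → ℝ) →L[ℝ] ℝ)
    exact isQuotientMap_quotient_mk'
  rw [← hq.isOpen_preimage]
  have heq : (Projectivization.mk' ℝ : {f : (Fin (n + 1) → ℝ) →L[ℝ] ℝ // f ≠ 0} → DProj n) ⁻¹'
        {L : DProj n | ∃ x ∈ U, L.rep x.rep = 0}
      = Subtype.val ⁻¹' {f : (Fin (n + 1) → ℝ) →L[ℝ] ℝ | ∃ x ∈ U, f ≠ 0 ∧ f x.rep = 0} := by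
    ext F
    have hmk : (Projectivization.mk' ℝ F : DProj n) = Projectivization.mk ℝ F.1 F.2 :=
      Projectivization.mk'_eq_mk ℝ F
    simp only [Set.mem_preimage, Set.mem_setOf_eq, hmk]
    constructor
    · rintro ⟨x, hxU, hx⟩
      exact ⟨x, hxU, F.2, (rep_zero_iff' F.1 F.2 x.rep).1 hx⟩
    · rintro ⟨x, hxU, _, hx⟩
      exact ⟨x, hxU, (rep_zero_iff' F.1 F.2 x.rep).2 hx⟩
  rw [heq]
  exact (aux_isOpen U hU).preimage continuous_subtype_val
end
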